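/- Let S be a nondecreasing càdlàg function on [−r,∞), X a càdlàg locally bounded function, and f_μ, f_ν nonnegative continuous functions supported on [−p,0] and [−q,0] respectively, with F_μ, F_ν the associated Volterra kernels F(t,s) = ∫_{[max(−p∨−q, s−t), min(s,0)]} f(u)du. Then the function Ξ(t) = ∫ F_μ(t,s) X(s) ds + ∫ F_ν(t,s) X(s−) dS(s) is locally Lipschitz continuous on [0,∞): for all t₁, t₂ in a compact interval [0,T], |Ξ(t₂) − Ξ(t₁)| ≤ 2(‖f_μ‖_∞ ∫_{−p}^{T}|X(s)|ds + ‖f_ν‖_∞ ∫_{(−q,T]}|X(s−)|dS(s)) |t₂ − t₁|. -/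

import Mathlib

open MeasureTheory intervalIntegral

private lemma prim_eq (f : ℝ → ℝ) (hf : Continuous f) (a b : ℝ) :
    (∫ u in a..b, f u) = (∫ u in (0:ℝ)..b, f u) - ∫ u in (0:ℝ)..a, f u :=
  (intervalIntegral.integral_interval_sub_left (hf.intervalIntegrable _ _)
    (hf.intervalIntegrable _ _)).symm

private lemma prim_nonneg_zero (f : ℝ → ℝ) (hsupp : ∀ u, 0 < u → f u = 0) {x : ℝ}
    (hx : 0 ≤ x) : (∫ u in (0:ℝ)..x, f u) = 0 := by
  rw [intervalIntegral.integral_of_le hx,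
    MeasureTheory.setIntegral_congr_fun measurableSet_Ioc
      (fun u hu => hsupp u hu.1 : Set.EqOn f 0 (Set.Ioc 0 x))]
  simp

private lemma key_est (c T : ℝ) (hc : 0 < c) (hT : 0 < T)
    (μ : Measure ℝ) (hfin : μ (Set.Ioc (-c) T) ≠ ⊤)
    (f : ℝ → ℝ) (M : ℝ) (hf : Continuous f) (hf0 : ∀ u, 0 ≤ f u)
    (hsupp : ∀ u, u ∉ Set.Icc (-c) 0 → f u = 0) (hM : ∀ u, f u ≤ M)
    (Y : ℝ → ℝ) (hY : Measurable Y) (CY : ℝ) (hCY : ∀ s ∈ Set.Ioc (-c) T, |Y s| ≤ CY)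
    (t₁ t₂ : ℝ) (ht₁ : t₁ ∈ Set.Icc (0:ℝ) T) (ht₂ : t₂ ∈ Set.Icc (0:ℝ) T) :
    |(∫ s in Set.Ioc (-c) t₂, (∫ u in (max (-c) (s - t₂))..(min s 0), f u) * Y s ∂μ) -
      ∫ s in Set.Ioc (-c) t₁, (∫ u in (max (-c) (s - t₁))..(min s 0), f u) * Y s ∂μ|
    ≤ M * |t₂ - t₁| * ∫ s in Set.Ioc (-c) T, |Y s| ∂μ := by
  have hM0 : 0 ≤ M := (hf0 0).trans (hM 0)
  have hsupp' : ∀ u, 0 < u → f u = 0 := fun u hu =>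
    hsupp u (by simp [Set.mem_Icc]; intro; linarith)
  set G : ℝ → ℝ := fun x => ∫ u in (0:ℝ)..x, f u with hG
  have hGcont : Continuous G :=
    intervalIntegral.continuous_primitive (fun a b => hf.intervalIntegrable a b) 0
  set K : ℝ → ℝ → ℝ := fun t s => (∫ u in (max (-c) (s - t))..(min s 0), f u) with hK
  have hKG : ∀ t s, K t s = G (min s 0) - G (max (-c) (s - t)) := fun t s =>
    prim_eq f hf _ _
  have hKcont : ∀ t, Continuous fun s => K t s := by
    intro t
    simp only [hKG]
    exact (hGcont.comp (continuous_id.min continuous_const)).sub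
      (hGcont.comp (continuous_const.max (continuous_id.sub continuous_const)))
  -- pointwise bound for K on Ioc (-c) T with t ∈ [0,T]
  have hKbdd : ∀ t ∈ Set.Icc (0:ℝ) T, ∀ s ∈ Set.Ioc (-c) T, |K t s| ≤ M * (T + c) := by
    intro t ht s hs
    have h1 : |K t s| ≤ M * |min s 0 - max (-c) (s - t)| := by
      have := intervalIntegral.norm_integral_le_of_norm_le_const
        (C := M) (f := f) (a := max (-c) (s - t)) (b := min s 0)
        (fun x _ => by rw [Real.norm_eq_abs, abs_of_nonneg (hf0 x)]; exact hM x)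
      rwa [Real.norm_eq_abs] at this
    have hb1 : -c ≤ min s 0 := le_min hs.1.le (by linarith)
    have hb2 : min s 0 ≤ T := (min_le_right s 0).trans hT.le
    have ha1 : -c ≤ max (-c) (s - t) := le_max_left _ _
    have ha2 : max (-c) (s - t) ≤ T := max_le (by linarith) (by linarith [hs.2, ht.1])
    have h2 : |min s 0 - max (-c) (s - t)| ≤ T + c :=
      abs_sub_le_iff.mpr ⟨by linarith, by linarith⟩
    calc |K t s| ≤ M * |min s 0 - max (-c) (s - t)| := h1
      _ ≤ M * (T + c) := mul_le_mul_of_nonneg_left h2 hM0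
  -- integrability
  have hintY : IntegrableOn (fun s => |Y s|) (Set.Ioc (-c) T) μ := by
    apply Measure.integrableOn_of_bounded hfin hY.abs.aestronglyMeasurable (M := CY)
    filter_upwards [ae_restrict_mem measurableSet_Ioc] with s hs
    rw [Real.norm_eq_abs, abs_abs]; exact hCY s hs
  have hint : ∀ t ∈ Set.Icc (0:ℝ) T,
      IntegrableOn (fun s => K t s * Y s) (Set.Ioc (-c) T) μ := by
    intro t ht
    apply Measure.integrableOn_of_bounded hfin
      (((hKcont t).measurable.mul hY).aestronglyMeasurable) (M := M * (T + c) * CY)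
    filter_upwards [ae_restrict_mem measurableSet_Ioc] with s hs
    rw [Real.norm_eq_abs, Pi.mul_apply, abs_mul]
    have h0CY : (0:ℝ) ≤ CY := (abs_nonneg _).trans (hCY s hs)
    exact mul_le_mul (hKbdd t ht s hs) (hCY s hs) (abs_nonneg _)
      (by positivity)
  -- extension of integral to Ioc (-c) T
  have hext : ∀ t ∈ Set.Icc (0:ℝ) T,
      (∫ s in Set.Ioc (-c) t, K t s * Y s ∂μ) = ∫ s in Set.Ioc (-c) T, K t s * Y s ∂μ := by
    intro t ht
    have hunion : Set.Ioc (-c) t ∪ Set.Ioc t T = Set.Ioc (-c) T :=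
      Set.Ioc_union_Ioc_eq_Ioc (by linarith [ht.1]) ht.2
    have hzero : (∫ s in Set.Ioc t T, K t s * Y s ∂μ) = 0 := by
      rw [MeasureTheory.setIntegral_congr_fun measurableSet_Ioc
        (g := fun _ => (0:ℝ))]
      · simp
      · intro s hs
        have hst : t < s := hs.1
        have hs0 : 0 < s := lt_of_le_of_lt ht.1 hst
        have hG0 : G 0 = 0 := by simp [hG]
        have hGst : G (s - t) = 0 := prim_nonneg_zero f hsupp' (by linarith : 0 ≤ s - t)
        have : K t s = 0 := by
          rw [hKG, min_eq_right hs0.le, max_eq_right (by linarith : -c ≤ s - t), hG0, hGst,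
            sub_zero]
        simp [this]
    rw [← hunion, MeasureTheory.setIntegral_union (Set.Ioc_disjoint_Ioc_of_le le_rfl)
      measurableSet_Ioc ((hint t ht).mono_set (by rw [← hunion]; exact Set.subset_union_left))
      ((hint t ht).mono_set (by rw [← hunion]; exact Set.subset_union_right)), hzero, add_zero]
  -- Lipschitz bound on kernel
  have hKlip : ∀ s, |K t₂ s - K t₁ s| ≤ M * |t₂ - t₁| := by
    intro s
    have hdiff : K t₂ s - K t₁ s =
        ∫ u in (max (-c) (s - t₂))..(max (-c) (s - t₁)), f u := by
      rw [hKG, hKG, prim_eq f hf]; ring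
    rw [hdiff]
    have h1 : |∫ u in (max (-c) (s - t₂))..(max (-c) (s - t₁)), f u| ≤
        M * |max (-c) (s - t₁) - max (-c) (s - t₂)| := by
      have := intervalIntegral.norm_integral_le_of_norm_le_const
        (C := M) (f := f) (a := max (-c) (s - t₂)) (b := max (-c) (s - t₁))
        (fun x _ => by rw [Real.norm_eq_abs, abs_of_nonneg (hf0 x)]; exact hM x)
      rwa [Real.norm_eq_abs] at this
    have h2 : |max (-c) (s - t₁) - max (-c) (s - t₂)| ≤ |t₂ - t₁| := by
      rw [max_comm (-c) (s - t₁), max_comm (-c) (s - t₂)]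
      calc |max (s - t₁) (-c) - max (s - t₂) (-c)| ≤ |(s - t₁) - (s - t₂)| :=
            abs_max_sub_max_le_abs _ _ _
        _ = |t₂ - t₁| := by ring_nf
    exact h1.trans (mul_le_mul_of_nonneg_left h2 hM0)
  -- main computation
  rw [hext t₂ ht₂, hext t₁ ht₁,
    ← MeasureTheory.integral_sub (hint t₂ ht₂) (hint t₁ ht₁)]
  have habs : |∫ s in Set.Ioc (-c) T, (K t₂ s * Y s - K t₁ s * Y s) ∂μ| ≤
      ∫ s in Set.Ioc (-c) T, |K t₂ s * Y s - K t₁ s * Y s| ∂μ := by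
    rw [← Real.norm_eq_abs]
    exact (MeasureTheory.norm_integral_le_integral_norm _)
  refine habs.trans ?_
  have hmono : (∫ s in Set.Ioc (-c) T, |K t₂ s * Y s - K t₁ s * Y s| ∂μ) ≤
      ∫ s in Set.Ioc (-c) T, M * |t₂ - t₁| * |Y s| ∂μ := by
    apply MeasureTheory.setIntegral_mono_on
      (f := fun s => |K t₂ s * Y s - K t₁ s * Y s|)
      (g := fun s => M * |t₂ - t₁| * |Y s|)
      (((hint t₂ ht₂).sub (hint t₁ ht₁)).abs) (hintY.const_mul _) measurableSet_Ioc
    intro s _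
    rw [← sub_mul, abs_mul]
    exact mul_le_mul_of_nonneg_right (hKlip s) (abs_nonneg _)
  refine hmono.trans ?_
  rw [MeasureTheory.integral_const_mul]

/-- Pathwise local Lipschitz continuity of the convoluted process
`Ξ(t) = ∫ F_μ(t,s) X(s) ds + ∫ F_ν(t,s) X(s−) dS(s)` (Proposition 4.4(b)). -/
theorem Xi_locally_lipschitz
    (p q : ℝ) (hp : 0 < p) (hq : 0 < q)
    (S : StieltjesFunction ℝ)
    (X Xl : ℝ → ℝ)
    (hX_meas : Measurable X) (hXl_meas : Measurable Xl)
    (hX_rc : ∀ t, ContinuousWithinAt X (Set.Ici t) t)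
    (hXl : ∀ t, Filter.Tendsto X (nhdsWithin t (Set.Iio t)) (nhds (Xl t)))
    (hX_locbdd : ∀ T : ℝ, ∃ C : ℝ, ∀ t ∈ Set.Icc (-(max p q)) T, |X t| ≤ C)
    (fμ fν : ℝ → ℝ) (Mμ Mν : ℝ)
    (hfμ_cont : Continuous fμ) (hfν_cont : Continuous fν)
    (hfμ_nonneg : ∀ u, 0 ≤ fμ u) (hfν_nonneg : ∀ u, 0 ≤ fν u)
    (hfμ_supp : ∀ u, u ∉ Set.Icc (-p) 0 → fμ u = 0)
    (hfν_supp : ∀ u, u ∉ Set.Icc (-q) 0 → fν u = 0)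
    (hMμ : ∀ u, fμ u ≤ Mμ) (hMν : ∀ u, fν u ≤ Mν) :
    ∀ T : ℝ, 0 < T → ∀ t₁ ∈ Set.Icc (0:ℝ) T, ∀ t₂ ∈ Set.Icc (0:ℝ) T,
      |((∫ s in (-p)..t₂, (∫ u in (max (-p) (s - t₂))..(min s 0), fμ u) * X s) +
          ∫ s in Set.Ioc (-q) t₂, (∫ u in (max (-q) (s - t₂))..(min s 0), fν u) * Xl s
            ∂S.measure) -
        ((∫ s in (-p)..t₁, (∫ u in (max (-p) (s - t₁))..(min s 0), fμ u) * X s) +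
          ∫ s in Set.Ioc (-q) t₁, (∫ u in (max (-q) (s - t₁))..(min s 0), fν u) * Xl s
            ∂S.measure)|
      ≤ 2 * (Mμ * (∫ s in (-p)..T, |X s|) +
              Mν * ∫ s in Set.Ioc (-q) T, |Xl s| ∂S.measure) * |t₂ - t₁| := by
  intro T hT t₁ ht₁ t₂ ht₂
  obtain ⟨C, hC⟩ := hX_locbdd T
  have hpm : -(max p q) ≤ -p := by simp [le_max_left]
  have hqm : -(max p q) ≤ -q := by simp [le_max_right]
  -- bound on X on Ioc (-p) T
  have hCX : ∀ s ∈ Set.Ioc (-p) T, |X s| ≤ C := fun s hs =>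
    hC s ⟨hpm.trans hs.1.le, hs.2⟩
  -- bound on Xl on Ioc (-q) T
  have hCXl : ∀ s ∈ Set.Ioc (-q) T, |Xl s| ≤ C := by
    intro s hs
    have hne : (nhdsWithin s (Set.Iio s)).NeBot := inferInstance
    have htend : Filter.Tendsto (fun u => |X u|) (nhdsWithin s (Set.Iio s))
        (nhds |Xl s|) := (continuous_abs.tendsto _).comp (hXl s)
    apply le_of_tendsto htend
    have hmem : Set.Ioi (-(max p q)) ∈ nhdsWithin s (Set.Iio s) :=
      nhdsWithin_le_nhds (Ioi_mem_nhds (lt_of_le_of_lt hqm hs.1))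
    filter_upwards [hmem, self_mem_nhdsWithin] with u hu1 hu2
    exact hC u ⟨le_of_lt hu1, le_of_lt (lt_of_lt_of_le hu2 hs.2)⟩
  -- rewrite interval integrals as set integrals
  have hpt₂ : -p ≤ t₂ := by linarith [ht₂.1]
  have hpt₁ : -p ≤ t₁ := by linarith [ht₁.1]
  have hpT : -p ≤ T := by linarith
  rw [intervalIntegral.integral_of_le hpt₂, intervalIntegral.integral_of_le hpt₁,
    intervalIntegral.integral_of_le hpT]
  have hμfin : (volume : Measure ℝ) (Set.Ioc (-p) T) ≠ ⊤ := by
    simp [Real.volume_Ioc]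
  have hνfin : S.measure (Set.Ioc (-q) T) ≠ ⊤ := by
    rw [S.measure_Ioc]; exact ENNReal.ofReal_ne_top
  have hA := key_est p T hp hT volume hμfin fμ Mμ hfμ_cont hfμ_nonneg hfμ_supp hMμ
    X hX_meas C hCX t₁ t₂ ht₁ ht₂
  have hB := key_est q T hq hT S.measure hνfin fν Mν hfν_cont hfν_nonneg hfν_supp hMν
    Xl hXl_meas C hCXl t₁ t₂ ht₁ ht₂
  have hIμ : 0 ≤ ∫ s in Set.Ioc (-p) T, |X s| :=
    MeasureTheory.setIntegral_nonneg measurableSet_Ioc (fun s _ => abs_nonneg _)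
  have hIν : 0 ≤ ∫ s in Set.Ioc (-q) T, |Xl s| ∂S.measure :=
    MeasureTheory.setIntegral_nonneg measurableSet_Ioc (fun s _ => abs_nonneg _)
  have hMμ0 : 0 ≤ Mμ := (hfμ_nonneg 0).trans (hMμ 0)
  have hMν0 : 0 ≤ Mν := (hfν_nonneg 0).trans (hMν 0)
  set A₂ := ∫ s in Set.Ioc (-p) t₂, (∫ u in (max (-p) (s - t₂))..(min s 0), fμ u) * X s
  set A₁ := ∫ s in Set.Ioc (-p) t₁, (∫ u in (max (-p) (s - t₁))..(min s 0), fμ u) * X s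
  set B₂ := ∫ s in Set.Ioc (-q) t₂, (∫ u in (max (-q) (s - t₂))..(min s 0), fν u) * Xl s
    ∂S.measure
  set B₁ := ∫ s in Set.Ioc (-q) t₁, (∫ u in (max (-q) (s - t₁))..(min s 0), fν u) * Xl s
    ∂S.measure
  have htri : |A₂ + B₂ - (A₁ + B₁)| ≤ |A₂ - A₁| + |B₂ - B₁| := by
    calc |A₂ + B₂ - (A₁ + B₁)| = |(A₂ - A₁) + (B₂ - B₁)| := by ring_nf
      _ ≤ |A₂ - A₁| + |B₂ - B₁| := abs_add_le _ _
  refine htri.trans ?_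
  have h1 : Mμ * |t₂ - t₁| * (∫ s in Set.Ioc (-p) T, |X s|) +
      Mν * |t₂ - t₁| * (∫ s in Set.Ioc (-q) T, |Xl s| ∂S.measure) ≤
      2 * (Mμ * (∫ s in Set.Ioc (-p) T, |X s|) +
        Mν * ∫ s in Set.Ioc (-q) T, |Xl s| ∂S.measure) * |t₂ - t₁| := by
    have h2 : 0 ≤ Mμ * (∫ s in Set.Ioc (-p) T, |X s|) * |t₂ - t₁| := by positivity
    have h3 : 0 ≤ Mν * (∫ s in Set.Ioc (-q) T, |Xl s| ∂S.measure) * |t₂ - t₁| := by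
      positivity
    nlinarith [h2, h3]
  exact (add_le_add hA hB).trans h1
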